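/- Let F, G, M be formal power series over ℚ such that F and G have zero constant coefficient, F(1 − G) = zG, G(1 − F) = z, and M = 1 + zM + z²M² (M is the Motzkin generating function, with constant coefficient 1). Then F = z²M and M · (1 − z − F) = 1. -/

import Mathlib

noncomputable section

/-- if `F`, `G` have zero constant coefficient and satisfy
`F(1-G) = zG`, `G(1-F) = z`, and `M` is the Motzkin series `M = 1 + zM + z²M²`,
then `F = z²M` and `M(1 - z - F) = 1`. -/
theorem retakh_paths_are_motzkin (F G M : PowerSeries ℚ)
    (hF0 : PowerSeries.constantCoeff F = 0)
    (hG0 : PowerSeries.constantCoeff G = 0)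
    (hFG : F * (1 - G) = PowerSeries.X * G)
    (hGF : G * (1 - F) = PowerSeries.X)
    (hM : M = 1 + PowerSeries.X * M + PowerSeries.X ^ 2 * M ^ 2) :
    F = PowerSeries.X ^ 2 * M ∧ M * (1 - PowerSeries.X - F) = 1 := by
  set X : PowerSeries ℚ := PowerSeries.X with hX
  have h1 : F = G * (F + X) := by linear_combination hFG
  have hFq : F = F ^ 2 + X * F + X ^ 2 := by
    linear_combination (1 - F) * h1 + (F + X) * hGF
  have key : (F - X ^ 2 * M) * (1 - X - F - X ^ 2 * M) = 0 := by
    linear_combination hFq - X ^ 2 * hM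
  have hne : (1 - X - F - X ^ 2 * M) ≠ 0 := by
    intro h
    have := congrArg (PowerSeries.constantCoeff (R := ℚ)) h
    simp [hF0, hX] at this
  have hF : F = X ^ 2 * M := by
    rcases mul_eq_zero.mp key with h | h
    · exact sub_eq_zero.mp h
    · exact absurd h hne
  refine ⟨hF, ?_⟩
  linear_combination hM - M * hF
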